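/- Let A, B, C be three affinely independent points in the Euclidean plane with dist A B = dist A C ≠ dist B C (a non-equilateral isosceles triangle with base BC), and let h_A = dist(A, line BC) and h_B = dist(B, line CA) denote the two distinct altitude lengths. If k lies strictly between min(h_A, h_B) and max(h_A, h_B), then the locus T_k = {P ∈ convexHull{A,B,C} : V(P) = k} is a line segment parallel to the base: there exist distinct points P, Q in the frontier of the triangle with Q − P a scalar multiple of C − B and T_k = segment [P, Q]. -/

import Mathlib

noncomputable section

/-- The point `(x, y)` of the Euclidean plane `ℝ²`. -/
def pt (x y : ℝ) : EuclideanSpace ℝ (Fin 2) :=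
  (WithLp.equiv 2 (Fin 2 → ℝ)).symm ![x, y]

/-- The line through `X` and `Y`, i.e. the affine span of `{X, Y}`, as a set. -/
def lineThrough (X Y : EuclideanSpace ℝ (Fin 2)) : Set (EuclideanSpace ℝ (Fin 2)) :=
  (affineSpan ℝ {X, Y} : AffineSubspace ℝ (EuclideanSpace ℝ (Fin 2)))

/-- The distance sum function of the triangle `ABC`:
`V(P) = dist(P, line BC) + dist(P, line CA) + dist(P, line AB)`. -/
def vSum (A B C P : EuclideanSpace ℝ (Fin 2)) : ℝ :=
  Metric.infDist P (lineThrough B C) + Metric.infDist P (lineThrough C A) +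
    Metric.infDist P (lineThrough A B)

/-- The squared-distance sum function of the triangle `ABC`:
`W(P) = dist(P, line BC)² + dist(P, line CA)² + dist(P, line AB)²`. -/
def wSum (A B C P : EuclideanSpace ℝ (Fin 2)) : ℝ :=
  Metric.infDist P (lineThrough B C) ^ 2 + Metric.infDist P (lineThrough C A) ^ 2 +
    Metric.infDist P (lineThrough A B) ^ 2

section Aux

local notation "E2" => EuclideanSpace ℝ (Fin 2)

/-- The signed area form on the plane. -/
def om (u v : E2) : ℝ := u 0 * v 1 - u 1 * v 0

lemma norm_sq_e2 (x : E2) : ‖x‖ ^ 2 = x 0 ^ 2 + x 1 ^ 2 := by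
  rw [EuclideanSpace.norm_eq, Real.sq_sqrt (by positivity)]
  simp [Fin.sum_univ_two, sq_abs]

lemma mem_line_iff (B C x : E2) :
    x ∈ affineSpan ℝ ({B, C} : Set E2) ↔ ∃ t : ℝ, x = t • (C - B) + B := by
  constructor
  · intro h
    have : (x - B) +ᵥ B ∈ affineSpan ℝ ({B, C} : Set E2) := by simpa using h
    obtain ⟨r, hr⟩ := vadd_left_mem_affineSpan_pair.mp this
    exact ⟨r, by simp at hr ⊢; rw [hr]; abel⟩
  · rintro ⟨t, rfl⟩
    have := AffineMap.lineMap_mem_affineSpan_pair (k := ℝ) t B C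
    simpa [AffineMap.lineMap_apply, vsub_eq_sub, vadd_eq_add] using this

lemma infDist_line (B C P : E2) (h : B ≠ C) :
    Metric.infDist P (lineThrough B C) = |om (P - B) (C - B)| / dist B C := by
  simp only [lineThrough]
  have hv : C - B ≠ 0 := sub_ne_zero.mpr (Ne.symm h)
  have hvn : (0:ℝ) < ‖C - B‖ := norm_pos_iff.mpr hv
  have hdist : dist B C = ‖C - B‖ := by rw [dist_eq_norm, ← norm_neg]; congr 1; abel
  set p := P - B with hp
  set v := C - B with hvdef
  have hnv2 : ‖v‖ ^ 2 = v 0 ^ 2 + v 1 ^ 2 := norm_sq_e2 v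
  have hnv2' : v 0 ^ 2 + v 1 ^ 2 ≠ 0 := by rw [← hnv2]; positivity
  have key : ∀ q : E2, |om q v| ≤ ‖q‖ * ‖v‖ := by
    intro q
    have h1 : om q v ^ 2 ≤ (‖q‖ * ‖v‖) ^ 2 := by
      rw [mul_pow, norm_sq_e2, norm_sq_e2]
      simp only [om]
      nlinarith [sq_nonneg (q 0 * v 0 + q 1 * v 1)]
    calc |om q v| = Real.sqrt (om q v ^ 2) := (Real.sqrt_sq_eq_abs _).symm
    _ ≤ Real.sqrt ((‖q‖ * ‖v‖) ^ 2) := Real.sqrt_le_sqrt h1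
    _ = ‖q‖ * ‖v‖ := Real.sqrt_sq (by positivity)
  have homlin : ∀ t : ℝ, om (p - t • v) v = om p v := by
    intro t
    simp only [om, PiLp.sub_apply, PiLp.smul_apply, smul_eq_mul]
    ring
  rw [hdist]
  apply le_antisymm
  · set t := (inner ℝ p v : ℝ) / ‖v‖ ^ 2 with ht
    have hinner : (inner ℝ p v : ℝ) = p 0 * v 0 + p 1 * v 1 := by
      simp [PiLp.inner_apply, Fin.sum_univ_two, RCLike.inner_apply, mul_comm]
    have hmem : t • v + B ∈ affineSpan ℝ ({B, C} : Set E2) := (mem_line_iff B C _).mpr ⟨t, rfl⟩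
    refine le_trans (Metric.infDist_le_dist_of_mem hmem) (le_of_eq ?_)
    have hd : dist P (t • v + B) = ‖p - t • v‖ := by
      rw [dist_eq_norm]; congr 1; simp only [hp]; abel
    rw [hd]
    have h2 : ‖p - t • v‖ ^ 2 * (v 0 ^ 2 + v 1 ^ 2) = om p v ^ 2 := by
      rw [norm_sq_e2]
      simp only [PiLp.sub_apply, PiLp.smul_apply, smul_eq_mul, om, ht, hinner, hnv2]
      field_simp
      ring
    have h3 : ‖p - t • v‖ ^ 2 = (|om p v| / ‖v‖) ^ 2 := by
      rw [div_pow, sq_abs, ← h2, hnv2]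
      field_simp
    calc ‖p - t • v‖ = Real.sqrt (‖p - t • v‖ ^ 2) := (Real.sqrt_sq (norm_nonneg _)).symm
    _ = Real.sqrt ((|om p v| / ‖v‖) ^ 2) := by rw [h3]
    _ = |om p v| / ‖v‖ := Real.sqrt_sq (by positivity)
  · by_contra hlt
    push_neg at hlt
    obtain ⟨y, hy, hylt⟩ := (Metric.infDist_lt_iff ⟨B, left_mem_affineSpan_pair ℝ B C⟩).mp hlt
    obtain ⟨t, rfl⟩ := (mem_line_iff B C y).mp hy
    have hd : dist P (t • v + B) = ‖p - t • v‖ := by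
      rw [dist_eq_norm]; congr 1; simp only [hp]; abel
    rw [hd] at hylt
    have := key (p - t • v)
    rw [homlin t] at this
    have h4 := (lt_div_iff₀ hvn).mp hylt
    linarith

lemma infDist_combo (A B C x : E2) (α β γ : ℝ) (hα : 0 ≤ α) (hsum : α + β + γ = 1)
    (hx : x = α • A + β • B + γ • C) (hBC : B ≠ C) :
    Metric.infDist x (lineThrough B C) = α * Metric.infDist A (lineThrough B C) := by
  rw [infDist_line B C x hBC, infDist_line B C A hBC]
  have hom : om (x - B) (C - B) = α * om (A - B) (C - B) := by
    have hβ : β = 1 - α - γ := by linarith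
    subst hx hβ
    simp only [om, PiLp.sub_apply, PiLp.add_apply, PiLp.smul_apply, smul_eq_mul]
    ring
  rw [hom, abs_mul, abs_of_nonneg hα, mul_div_assoc]

lemma mem_triangle (A B C : E2) (α β γ : ℝ) (hα : 0 ≤ α) (hβ : 0 ≤ β) (hγ : 0 ≤ γ)
    (hsum : α + β + γ = 1) :
    α • A + β • B + γ • C ∈ convexHull ℝ ({A, B, C} : Set E2) := by
  have hsub := subset_convexHull ℝ ({A, B, C} : Set E2)
  rcases eq_or_lt_of_le (by linarith : (0:ℝ) ≤ β + γ) with h0 | h0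
  · have hβ0 : β = 0 := by linarith
    have hγ0 : γ = 0 := by linarith
    have hα1 : α = 1 := by linarith
    have : α • A + β • B + γ • C = A := by rw [hβ0, hγ0, hα1]; module
    rw [this]
    exact hsub (by simp)
  · have hne : β + γ ≠ 0 := h0.ne'
    rw [show ({A, B, C} : Set E2) = insert A {B, C} from rfl,
      convexHull_insert ⟨B, by simp⟩]
    rw [mem_convexJoin]
    refine ⟨A, by simp, (β / (β + γ)) • B + (γ / (β + γ)) • C, ?_, ?_⟩
    · rw [convexHull_pair]
      exact ⟨β / (β + γ), γ / (β + γ), by positivity, by positivity, by field_simp, rfl⟩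
    · exact ⟨α, β + γ, hα, h0.le, by linarith, by match_scalars <;> field_simp⟩

lemma triangle_rep (A B C x : E2) (hx : x ∈ convexHull ℝ ({A, B, C} : Set E2)) :
    ∃ α β γ : ℝ, 0 ≤ α ∧ 0 ≤ β ∧ 0 ≤ γ ∧ α + β + γ = 1 ∧ x = α • A + β • B + γ • C := by
  rw [show ({A, B, C} : Set E2) = insert A {B, C} from rfl,
    convexHull_insert ⟨B, by simp⟩, mem_convexJoin] at hx
  obtain ⟨a, ha, y, hy, hseg⟩ := hx
  rw [Set.mem_singleton_iff] at ha
  subst ha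
  rw [convexHull_pair] at hy
  obtain ⟨u', v', hu', hv', huv', hy'⟩ := hy
  obtain ⟨u, v, hu, hv, huv, hx'⟩ := hseg
  refine ⟨u, v * u', v * v', hu, mul_nonneg hv hu', mul_nonneg hv hv', by nlinarith, ?_⟩
  rw [← hx', ← hy']
  module

lemma sign_on_triangle (A B C : E2) (z : E2) (hz : z ∈ convexHull ℝ ({A, B, C} : Set E2)) :
    0 ≤ om (C - A) (B - A) * om (z - A) (B - A) := by
  obtain ⟨α, β, γ, hα, hβ, hγ, hsum, hzeq⟩ := triangle_rep A B C z hz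
  have hom : om (z - A) (B - A) = γ * om (C - A) (B - A) := by
    have hβ' : β = 1 - α - γ := by linarith
    subst hzeq hβ'
    simp only [om, PiLp.sub_apply, PiLp.add_apply, PiLp.smul_apply, smul_eq_mul]
    ring
  rw [hom]
  nlinarith [sq_nonneg (om (C - A) (B - A))]

lemma mem_frontier_edge (A B C : E2) (hd : om (C - A) (B - A) ≠ 0) (u : ℝ)
    (hu0 : 0 ≤ u) (hu1 : u ≤ 1) :
    u • A + (1 - u) • B ∈ frontier (convexHull ℝ ({A, B, C} : Set E2)) := by
  set x := u • A + (1 - u) • B with hxdef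
  set T := convexHull ℝ ({A, B, C} : Set E2) with hT
  have hxT : x ∈ T := by
    have := mem_triangle A B C u (1 - u) 0 hu0 (by linarith) le_rfl (by ring)
    simpa using this
  rw [frontier_eq_closure_inter_closure]
  refine ⟨subset_closure hxT, ?_⟩
  rw [Metric.mem_closure_iff]
  intro ε hε
  set δ := ε / (2 * (‖x - C‖ + 1)) with hδ
  have hnc : (0:ℝ) < ‖x - C‖ + 1 := by positivity
  have hδpos : 0 < δ := by positivity
  refine ⟨x + δ • (x - C), ?_, ?_⟩
  · simp only [Set.mem_compl_iff]
    intro hmem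
    have hsign := sign_on_triangle A B C _ hmem
    have hom : om (x + δ • (x - C) - A) (B - A) = -δ * om (C - A) (B - A) := by
      simp only [hxdef, om, PiLp.sub_apply, PiLp.add_apply, PiLp.smul_apply, smul_eq_mul]
      ring
    rw [hom] at hsign
    nlinarith [sq_pos_of_ne_zero hd]
  · have : dist x (x + δ • (x - C)) = δ * ‖x - C‖ := by
      rw [dist_eq_norm]
      have : x - (x + δ • (x - C)) = (-δ) • (x - C) := by module
      rw [this, norm_smul]
      simp [abs_of_pos hδpos]
    rw [this, hδ]
    calc ε / (2 * (‖x - C‖ + 1)) * ‖x - C‖ ≤ ε / 2 * 1 := by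
          rw [div_mul_eq_mul_div, div_mul_eq_mul_div, div_le_div_iff₀ (by positivity) (by norm_num)]
          nlinarith [norm_nonneg (x - C)]
    _ < ε := by linarith

end Aux

/-- **Proposition 1.** For a non-equilateral isosceles triangle with base `BC` and `k`
strictly between the two altitude lengths, the locus `T_k` is a segment parallel to the
base, with endpoints on the boundary of the triangle. -/
theorem stmt_5 (A B C : EuclideanSpace ℝ (Fin 2))
    (hind : AffineIndependent ℝ ![A, B, C])
    (hiso : dist A B = dist A C) (hneq : dist A B ≠ dist B C) (k : ℝ)
    (hk₁ : min (Metric.infDist A (lineThrough B C)) (Metric.infDist B (lineThrough C A)) < k)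
    (hk₂ : k < max (Metric.infDist A (lineThrough B C)) (Metric.infDist B (lineThrough C A))) :
    ∃ P Q : EuclideanSpace ℝ (Fin 2), P ≠ Q ∧
      P ∈ frontier (convexHull ℝ ({A, B, C} : Set (EuclideanSpace ℝ (Fin 2)))) ∧
      Q ∈ frontier (convexHull ℝ ({A, B, C} : Set (EuclideanSpace ℝ (Fin 2)))) ∧
      (∃ t : ℝ, Q - P = t • (C - B)) ∧
      {P' ∈ convexHull ℝ ({A, B, C} : Set (EuclideanSpace ℝ (Fin 2))) | vSum A B C P' = k}
        = segment ℝ P Q := by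
  have hAB : A ≠ B := by
    intro h
    have := hind.injective (show ![A, B, C] 0 = ![A, B, C] 1 by simpa using h)
    simp at this
  have hBC : B ≠ C := by
    intro h
    have := hind.injective (show ![A, B, C] 1 = ![A, B, C] 2 by simpa using h)
    simp at this
  have hCA : C ≠ A := by
    intro h
    have := hind.injective (show ![A, B, C] 2 = ![A, B, C] 0 by simpa using h)
    simp at this
  set d := om (A - B) (C - B) with hd_def
  have e1 : om (B - C) (A - C) = d := by
    rw [hd_def]; simp only [om, PiLp.sub_apply]; ring
  have e2 : om (C - A) (B - A) = d := by
    rw [hd_def]; simp only [om, PiLp.sub_apply]; ring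
  set hA := Metric.infDist A (lineThrough B C) with hA_def
  set hB := Metric.infDist B (lineThrough C A) with hB_def
  set hC := Metric.infDist C (lineThrough A B) with hC_def
  have hAline : hA = |d| / dist B C := by
    rw [hA_def, infDist_line B C A hBC]
  have hBline : hB = |d| / dist C A := by
    rw [hB_def, infDist_line C A B hCA, e1]
  have hCline : hC = |d| / dist A B := by
    rw [hC_def, infDist_line A B C hAB, e2]
  have hd0 : d ≠ 0 := by
    intro h0
    have hA0 : hA = 0 := by rw [hAline, h0]; simp
    have hmem : A ∈ affineSpan ℝ ({B, C} : Set (EuclideanSpace ℝ (Fin 2))) := by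
      have hcl : IsClosed ((affineSpan ℝ ({B, C} : Set (EuclideanSpace ℝ (Fin 2)))) :
          Set (EuclideanSpace ℝ (Fin 2))) :=
        (affineSpan ℝ {B, C}).closed_of_finiteDimensional
      have hmem' : A ∈ ((affineSpan ℝ ({B, C} : Set (EuclideanSpace ℝ (Fin 2)))) :
          Set (EuclideanSpace ℝ (Fin 2))) := by
        rw [hcl.mem_iff_infDist_zero ⟨B, left_mem_affineSpan_pair ℝ B C⟩]
        simpa [lineThrough, hA_def] using hA0
      exact hmem'
    have hcol : Collinear ℝ ({A, B, C} : Set (EuclideanSpace ℝ (Fin 2))) :=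
      collinear_insert_of_mem_affineSpan_pair hmem
    have hnc := affineIndependent_iff_not_collinear.mp hind
    apply hnc
    convert hcol using 1
    ext z
    simp [Fin.exists_fin_succ, Fin.exists_fin_two, eq_comm]
    tauto
  have habs : 0 < |d| := abs_pos.mpr hd0
  have hdBC : 0 < dist B C := dist_pos.mpr hBC
  have hdCA : 0 < dist C A := dist_pos.mpr hCA
  have hdAB : 0 < dist A B := dist_pos.mpr hAB
  have hCB_eq : hC = hB := by
    rw [hBline, hCline]
    rw [show dist C A = dist A B by rw [dist_comm]; exact hiso.symm]
  have hAneB : hA ≠ hB := by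
    rw [hAline, hBline]
    intro h
    have : dist B C = dist C A := by
      rw [div_eq_div_iff hdBC.ne' hdCA.ne'] at h
      exact (mul_left_cancel₀ habs.ne' h).symm
    rw [dist_comm C A, ← hiso] at this
    exact hneq this.symm
  have hden : hA - hB ≠ 0 := sub_ne_zero.mpr hAneB
  set s := (k - hB) / (hA - hB) with hs_def
  have hs01 : 0 < s ∧ s < 1 := by
    have h1ms : 1 - s = (hA - k) / (hA - hB) := by
      rw [hs_def]; field_simp; ring
    rcases hAneB.lt_or_gt with hlt | hlt
    · have h1 : hA < k := by simpa [min_eq_left hlt.le] using hk₁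
      have h2 : k < hB := by simpa [max_eq_right hlt.le] using hk₂
      constructor
      · rw [hs_def, div_pos_iff]; right; constructor <;> linarith
      · have : 0 < 1 - s := by
          rw [h1ms, div_pos_iff]; right; constructor <;> linarith
        linarith
    · have h1 : hB < k := by simpa [min_eq_right hlt.le] using hk₁
      have h2 : k < hA := by simpa [max_eq_left hlt.le] using hk₂
      constructor
      · rw [hs_def, div_pos_iff]; left; constructor <;> linarith
      · have : 0 < 1 - s := by
          rw [h1ms, div_pos_iff]; left; constructor <;> linarith
        linarith
  obtain ⟨hs0, hs1⟩ := hs01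
  have h1s : 0 < 1 - s := by linarith
  set P := s • A + (1 - s) • B with hP_def
  set Q := s • A + (1 - s) • C with hQ_def
  have hQP : Q - P = (1 - s) • (C - B) := by rw [hP_def, hQ_def]; module
  refine ⟨P, Q, ?_, ?_, ?_, ⟨1 - s, hQP⟩, ?_⟩
  · intro h
    rw [h, sub_self] at hQP
    rcases smul_eq_zero.mp hQP.symm with h' | h'
    · linarith
    · exact hBC (sub_eq_zero.mp h').symm
  · exact mem_frontier_edge A B C (by rw [e2]; exact hd0) s hs0.le hs1.le
  · have hset : ({A, C, B} : Set (EuclideanSpace ℝ (Fin 2))) = {A, B, C} := by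
      rw [Set.pair_comm C B]
    have hd' : om (B - A) (C - A) ≠ 0 := by
      have : om (B - A) (C - A) = -d := by
        rw [hd_def]; simp only [om, PiLp.sub_apply]; ring
      rw [this]
      exact neg_ne_zero.mpr hd0
    have := mem_frontier_edge A C B hd' s hs0.le hs1.le
    rw [hset] at this
    exact this
  · ext x
    simp only [Set.mem_setOf_eq]
    constructor
    · rintro ⟨hxT, hV⟩
      obtain ⟨α, β, γ, hα, hβ, hγ, hsum, hxeq⟩ := triangle_rep A B C x hxT
      have h1 : Metric.infDist x (lineThrough B C) = α * hA :=
        infDist_combo A B C x α β γ hα hsum hxeq hBC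
      have h2 : Metric.infDist x (lineThrough C A) = β * hB :=
        infDist_combo B C A x β γ α hβ (by linarith) (by rw [hxeq]; module) hCA
      have h3 : Metric.infDist x (lineThrough A B) = γ * hC :=
        infDist_combo C A B x γ α β hγ (by linarith) (by rw [hxeq]; module) hAB
      have hVx : α * hA + β * hB + γ * hB = k := by
        rw [vSum, h1, h2, h3, hCB_eq] at hV
        exact hV
      have h4 : α * (hA - hB) = k - hB := by linear_combination hVx - hB * hsum
      have hα_eq : α = s := by
        rw [hs_def, eq_div_iff hden]
        exact h4
      have hβγ : β + γ = 1 - s := by rw [← hα_eq]; linarith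
      refine ⟨β / (1 - s), γ / (1 - s), div_nonneg hβ h1s.le, div_nonneg hγ h1s.le, ?_, ?_⟩
      · field_simp
        linarith
      · rw [hxeq, hα_eq, hP_def, hQ_def]
        match_scalars
        · have e : β / (1 - s) + γ / (1 - s) = 1 := by
            rw [← add_div, hβγ, div_self h1s.ne']
          linear_combination s * e
        · field_simp
        · field_simp
    · rintro ⟨u, v, hu, hv, huv, hxeq⟩
      have hxrep : x = s • A + ((1 - s) * u) • B + ((1 - s) * v) • C := by
        rw [← hxeq, hP_def, hQ_def]
        match_scalars
        · linear_combination s * huv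
        · ring
        · ring
      constructor
      · rw [hxrep]
        exact mem_triangle A B C s _ _ hs0.le (mul_nonneg h1s.le hu) (mul_nonneg h1s.le hv)
          (by linear_combination (1 - s) * huv)
      · have h1 : Metric.infDist x (lineThrough B C) = s * hA :=
          infDist_combo A B C x s ((1 - s) * u) ((1 - s) * v) hs0.le (by nlinarith) hxrep hBC
        have hsum1 : s + (1 - s) * u + (1 - s) * v = 1 := by linear_combination (1 - s) * huv
        have h2 : Metric.infDist x (lineThrough C A) = ((1 - s) * u) * hB :=
          infDist_combo B C A x ((1 - s) * u) ((1 - s) * v) s (mul_nonneg h1s.le hu)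
            (by linarith) (by rw [hxrep]; module) hCA
        have h3 : Metric.infDist x (lineThrough A B) = ((1 - s) * v) * hC :=
          infDist_combo C A B x ((1 - s) * v) s ((1 - s) * u) (mul_nonneg h1s.le hv)
            (by linarith) (by rw [hxrep]; module) hAB
        have hmul : s * (hA - hB) = k - hB := by
          rw [hs_def]; field_simp
        rw [vSum, h1, h2, h3, hCB_eq]
        linear_combination hmul + hB * (1 - s) * huv
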